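/- Let g, φ ∈ L²(ℝ; ℂ), let N, M be positive integers, T, Δf > 0, and X : {0,…,N−1}×{0,…,M−1} → ℂ. Define x(t) = Σ_{n'=0}^{N−1} Σ_{m'=0}^{M−1} X[n',m'] φ(t − n'T) e^{2πi m'Δf (t − n'T)} and y(t) = Σ_{i=1}^P h_i e^{2πi ν_i (t − τ_i)} x(t − τ_i) with h_i ∈ ℂ, τ_i, ν_i ∈ ℝ. Assume the pulses are bi-orthogonal robustly to the channel's delay-Doppler shifts: for every i = 1,…,P and all 0 ≤ n, n' ≤ N−1, 0 ≤ m, m' ≤ M−1, A_{g,φ}((n−n')T − τ_i, (m−m')Δf − ν_i) = 1 if (n',m') = (n,m) and = 0 otherwise. Then the sampled cross-ambiguity Y[n,m] := A_{g,y}(nT, mΔf) satisfies Y[n,m] = H[n,m]·X[n,m] for all n, m, where H[n,m] = Σ_{i=1}^P h_i e^{2πi ν_i n T} e^{−2πi(ν_i + mΔf)τ_i}; i.e., time-frequency modulation renders the doubly-dispersive channel multiplicative, with each symbol X[n,m] multiplied by its own fade H[n,m]. -/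

import Mathlib

open MeasureTheory Finset
open scoped ENNReal

section Helpers

private lemma memL2_shift {f : ℝ → ℂ} (hf : MemLp f 2 (volume : Measure ℝ)) (a : ℝ) :
    MemLp (fun t => f (t - a)) 2 (volume : Measure ℝ) :=
  hf.comp_measurePreserving (measurePreserving_sub_right volume a)

private lemma memL2_conj {f : ℝ → ℂ} (hf : MemLp f 2 (volume : Measure ℝ)) :
    MemLp (fun t => (starRingEnd ℂ) (f t)) 2 (volume : Measure ℝ) :=
  hf.of_le (continuous_star.comp_aestronglyMeasurable hf.1)
    (Filter.Eventually.of_forall fun t => by simp)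

private lemma integrable_mul_L2 {f h : ℝ → ℂ} (hf : MemLp f 2 (volume : Measure ℝ))
    (hh : MemLp h 2 (volume : Measure ℝ)) :
    Integrable (fun t => f t * h t) volume := by
  rw [← memLp_one_iff_integrable]
  have h2 : (1 : ℝ≥0∞) / 1 = 1 / 2 + 1 / 2 := by
    rw [ENNReal.div_add_div_same, one_add_one_eq_two, div_one,
      ENNReal.div_self (by norm_num) (by norm_num)]
  simpa [Pi.smul_apply, smul_eq_mul, Pi.mul_def] using hh.smul hf (r := 1)

private lemma integrable_base {g φ : ℝ → ℂ} (hg : MemLp g 2 (volume : Measure ℝ))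
    (hφ : MemLp φ 2 (volume : Measure ℝ)) (τ' ν' : ℝ) :
    Integrable (fun s : ℝ => (starRingEnd ℂ) (g (s - τ')) * φ s *
      Complex.exp (-(2 * Real.pi * Complex.I) * ((ν' : ℂ) * ((s : ℂ) - (τ' : ℂ))))) volume := by
  have h1 : Integrable (fun s : ℝ => (starRingEnd ℂ) (g (s - τ')) * φ s) volume :=
    integrable_mul_L2 (memL2_shift (memL2_conj hg) τ') hφ
  have hmeas : AEStronglyMeasurable
      (fun s : ℝ => Complex.exp (-(2 * Real.pi * Complex.I) *
        ((ν' : ℂ) * ((s : ℂ) - (τ' : ℂ))))) volume := by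
    apply Continuous.aestronglyMeasurable
    exact Complex.continuous_exp.comp (by continuity)
  have hbdd : ∃ C : ℝ, ∀ s : ℝ,
      ‖Complex.exp (-(2 * Real.pi * Complex.I) * ((ν' : ℂ) * ((s : ℂ) - (τ' : ℂ))))‖ ≤ C := by
    refine ⟨1, fun s => ?_⟩
    have hrw : -(2 * Real.pi * Complex.I) * ((ν' : ℂ) * ((s : ℂ) - (τ' : ℂ)))
        = ((-(2 * Real.pi) * (ν' * (s - τ')) : ℝ) : ℂ) * Complex.I := by push_cast; ring
    rw [hrw, Complex.norm_exp_ofReal_mul_I]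
  exact (h1.bdd_mul hmeas (Filter.Eventually.of_forall hbdd.choose_spec)).congr (Filter.Eventually.of_forall fun s => by ring)

private lemma integral_shift_eq (g φ : ℝ → ℂ) (τ' ν' a : ℝ) :
    (∫ t : ℝ, (starRingEnd ℂ) (g ((t - a) - τ')) * φ (t - a) *
      Complex.exp (-(2 * Real.pi * Complex.I) *
        ((ν' : ℂ) * (((t - a : ℝ) : ℂ) - (τ' : ℂ))))) =
      ∫ s : ℝ, (starRingEnd ℂ) (g (s - τ')) * φ s *
        Complex.exp (-(2 * Real.pi * Complex.I) * ((ν' : ℂ) * ((s : ℂ) - (τ' : ℂ)))) :=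
  integral_sub_right_eq_self (fun s : ℝ => (starRingEnd ℂ) (g (s - τ')) * φ s *
      Complex.exp (-(2 * Real.pi * Complex.I) * ((ν' : ℂ) * ((s : ℂ) - (τ' : ℂ))))) a

private lemma integrable_shift {g φ : ℝ → ℂ} (hg : MemLp g 2 (volume : Measure ℝ))
    (hφ : MemLp φ 2 (volume : Measure ℝ)) (τ' ν' a : ℝ) :
    Integrable (fun t : ℝ => (starRingEnd ℂ) (g ((t - a) - τ')) * φ (t - a) *
      Complex.exp (-(2 * Real.pi * Complex.I) *
        ((ν' : ℂ) * (((t - a : ℝ) : ℂ) - (τ' : ℂ))))) volume :=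
  (integrable_base hg hφ τ' ν').comp_sub_right a

private lemma exp_mul3 (z1 z2 z3 w1 w2 : ℂ) (hw : z1 + z2 + z3 = w1 + w2) :
    Complex.exp z1 * Complex.exp z2 * Complex.exp z3 = Complex.exp w1 * Complex.exp w2 := by
  rw [← Complex.exp_add, ← Complex.exp_add, ← Complex.exp_add, hw]

end Helpers

/-- The cross-ambiguity function
`A_{g,f}(τ,ν) = ∫ conj(g(t−τ)) f(t) e^{−2πi ν (t−τ)} dt`. -/
noncomputable def crossAmbiguity (g f : ℝ → ℂ) (τ ν : ℝ) : ℂ :=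
  ∫ t : ℝ, (starRingEnd ℂ) (g (t - τ)) * f t *
    Complex.exp (-(2 * Real.pi * Complex.I) * ((ν : ℂ) * ((t : ℂ) - (τ : ℂ))))

/-- Under bi-orthogonality of the transmit/receive pulses robust to the channel's
delay-Doppler shifts, time-frequency modulation renders the doubly-dispersive
channel multiplicative: `Y[n,m] = H[n,m] X[n,m]`. -/
theorem tf_modulation_multiplicative_channel
    (g φ : ℝ → ℂ) (hg : MemLp g 2 (volume : Measure ℝ))
    (hφ : MemLp φ 2 (volume : Measure ℝ))
    (N M : ℕ) (hN : 0 < N) (hM : 0 < M)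
    (T Δf : ℝ) (hT : 0 < T) (hΔf : 0 < Δf)
    (X : ℕ → ℕ → ℂ)
    (P : ℕ) (h : Fin P → ℂ) (τ ν : Fin P → ℝ)
    (x : ℝ → ℂ)
    (hx : ∀ t : ℝ, x t = ∑ n' ∈ Finset.range N, ∑ m' ∈ Finset.range M,
      X n' m' * φ (t - n' * T) *
        Complex.exp (2 * Real.pi * Complex.I * (((m' * Δf * (t - n' * T) : ℝ)) : ℂ)))
    (y : ℝ → ℂ)
    (hy : ∀ t : ℝ, y t = ∑ i : Fin P,
      h i * Complex.exp (2 * Real.pi * Complex.I * ((ν i * (t - τ i) : ℝ) : ℂ)) *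
        x (t - τ i))
    (hbiorth : ∀ i : Fin P, ∀ n n' m m' : ℕ, n < N → n' < N → m < M → m' < M →
      crossAmbiguity g φ (((n : ℝ) - (n' : ℝ)) * T - τ i)
          (((m : ℝ) - (m' : ℝ)) * Δf - ν i) =
        if n' = n ∧ m' = m then 1 else 0) :
    ∀ n < N, ∀ m < M,
      crossAmbiguity g y ((n : ℝ) * T) ((m : ℝ) * Δf) =
        (∑ i : Fin P,
          h i * Complex.exp (2 * Real.pi * Complex.I * ((ν i * n * T : ℝ) : ℂ)) *
            Complex.exp (-(2 * Real.pi * Complex.I) *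
              (((ν i + m * Δf) * τ i : ℝ) : ℂ))) * X n m := by
  intro n hn m hm
  -- pointwise expansion of the integrand into a triple sum of shifted
  -- cross-ambiguity integrands times constants
  have hpt : ∀ t : ℝ,
      (starRingEnd ℂ) (g (t - (n : ℝ) * T)) * y t *
        Complex.exp (-(2 * Real.pi * Complex.I) *
          ((((m : ℝ) * Δf : ℝ) : ℂ) * ((t : ℂ) - (((n : ℝ) * T : ℝ) : ℂ)))) =
      ∑ i : Fin P, ∑ n' ∈ Finset.range N, ∑ m' ∈ Finset.range M,
        (h i * X n' m' * Complex.exp (2 * Real.pi * Complex.I *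
          ((ν i * ((n : ℝ) * T - τ i) +
            (m' : ℝ) * Δf * (((n : ℝ) - (n' : ℝ)) * T - τ i) : ℝ) : ℂ))) *
        ((starRingEnd ℂ) (g ((t - (τ i + (n' : ℝ) * T)) - (((n : ℝ) - (n' : ℝ)) * T - τ i))) *
          φ (t - (τ i + (n' : ℝ) * T)) *
          Complex.exp (-(2 * Real.pi * Complex.I) *
            (((((m : ℝ) - (m' : ℝ)) * Δf - ν i : ℝ) : ℂ) *
              (((t - (τ i + (n' : ℝ) * T) : ℝ) : ℂ) -
                ((((n : ℝ) - (n' : ℝ)) * T - τ i : ℝ) : ℂ))))) := by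
    intro t
    rw [hy t]
    simp only [hx]
    simp only [Finset.mul_sum, Finset.sum_mul]
    refine Finset.sum_congr rfl fun i _ => Finset.sum_congr rfl fun n' _ =>
      Finset.sum_congr rfl fun m' _ => ?_
    rw [show t - (τ i + (n' : ℝ) * T) = t - τ i - (n' : ℝ) * T from by ring]
    rw [show t - τ i - (n' : ℝ) * T - (((n : ℝ) - (n' : ℝ)) * T - τ i) = t - (n : ℝ) * T
      from by ring]
    have hE := exp_mul3
      (2 * Real.pi * Complex.I * ((ν i * (t - τ i) : ℝ) : ℂ))
      (2 * Real.pi * Complex.I * (((m' : ℝ) * Δf * (t - τ i - (n' : ℝ) * T) : ℝ) : ℂ))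
      (-(2 * Real.pi * Complex.I) *
        ((((m : ℝ) * Δf : ℝ) : ℂ) * ((t : ℂ) - (((n : ℝ) * T : ℝ) : ℂ))))
      (2 * Real.pi * Complex.I *
        ((ν i * ((n : ℝ) * T - τ i) +
          (m' : ℝ) * Δf * (((n : ℝ) - (n' : ℝ)) * T - τ i) : ℝ) : ℂ))
      (-(2 * Real.pi * Complex.I) *
        (((((m : ℝ) - (m' : ℝ)) * Δf - ν i : ℝ) : ℂ) *
          (((t - τ i - (n' : ℝ) * T : ℝ) : ℂ) -
            ((((n : ℝ) - (n' : ℝ)) * T - τ i : ℝ) : ℂ))))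
      (by push_cast; ring)
    linear_combination
      ((starRingEnd ℂ) (g (t - (n : ℝ) * T)) * φ (t - τ i - (n' : ℝ) * T) * h i * X n' m') * hE
  -- per-i evaluation of the integral
  have hinner : ∀ i : Fin P,
      (∫ t : ℝ, ∑ n' ∈ Finset.range N, ∑ m' ∈ Finset.range M,
        (h i * X n' m' * Complex.exp (2 * Real.pi * Complex.I *
          ((ν i * ((n : ℝ) * T - τ i) +
            (m' : ℝ) * Δf * (((n : ℝ) - (n' : ℝ)) * T - τ i) : ℝ) : ℂ))) *
        ((starRingEnd ℂ) (g ((t - (τ i + (n' : ℝ) * T)) - (((n : ℝ) - (n' : ℝ)) * T - τ i))) *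
          φ (t - (τ i + (n' : ℝ) * T)) *
          Complex.exp (-(2 * Real.pi * Complex.I) *
            (((((m : ℝ) - (m' : ℝ)) * Δf - ν i : ℝ) : ℂ) *
              (((t - (τ i + (n' : ℝ) * T) : ℝ) : ℂ) -
                ((((n : ℝ) - (n' : ℝ)) * T - τ i : ℝ) : ℂ)))))) =
      h i * X n m * Complex.exp (2 * Real.pi * Complex.I *
        ((ν i * ((n : ℝ) * T - τ i) +
          (m : ℝ) * Δf * (((n : ℝ) - (n : ℝ)) * T - τ i) : ℝ) : ℂ)) := by
    intro i
    rw [integral_finset_sum _ (fun n' _ => integrable_finset_sum _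
      (fun m' _ => (integrable_shift hg hφ _ _ _).const_mul _))]
    have hterm : ∀ n' ∈ Finset.range N, ∀ m' ∈ Finset.range M,
        (∫ t : ℝ,
          (h i * X n' m' * Complex.exp (2 * Real.pi * Complex.I *
            ((ν i * ((n : ℝ) * T - τ i) +
              (m' : ℝ) * Δf * (((n : ℝ) - (n' : ℝ)) * T - τ i) : ℝ) : ℂ))) *
          ((starRingEnd ℂ) (g ((t - (τ i + (n' : ℝ) * T)) - (((n : ℝ) - (n' : ℝ)) * T - τ i))) *
            φ (t - (τ i + (n' : ℝ) * T)) *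
            Complex.exp (-(2 * Real.pi * Complex.I) *
              (((((m : ℝ) - (m' : ℝ)) * Δf - ν i : ℝ) : ℂ) *
                (((t - (τ i + (n' : ℝ) * T) : ℝ) : ℂ) -
                  ((((n : ℝ) - (n' : ℝ)) * T - τ i : ℝ) : ℂ)))))) =
        (h i * X n' m' * Complex.exp (2 * Real.pi * Complex.I *
          ((ν i * ((n : ℝ) * T - τ i) +
            (m' : ℝ) * Δf * (((n : ℝ) - (n' : ℝ)) * T - τ i) : ℝ) : ℂ))) *
          (if n' = n ∧ m' = m then 1 else 0) := by
      intro n' hn' m' hm'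
      rw [integral_const_mul, integral_shift_eq g φ (((n : ℝ) - (n' : ℝ)) * T - τ i)
        ((((m : ℝ) - (m' : ℝ)) * Δf - ν i)) (τ i + (n' : ℝ) * T)]
      rw [show (∫ s : ℝ, (starRingEnd ℂ) (g (s - (((n : ℝ) - (n' : ℝ)) * T - τ i))) * φ s *
          Complex.exp (-(2 * Real.pi * Complex.I) *
            (((((m : ℝ) - (m' : ℝ)) * Δf - ν i : ℝ) : ℂ) *
              ((s : ℂ) - ((((n : ℝ) - (n' : ℝ)) * T - τ i : ℝ) : ℂ))))) =
          crossAmbiguity g φ (((n : ℝ) - (n' : ℝ)) * T - τ i)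
            (((m : ℝ) - (m' : ℝ)) * Δf - ν i) from rfl]
      rw [hbiorth i n n' m m' hn (Finset.mem_range.mp hn') hm (Finset.mem_range.mp hm')]
    calc (∑ n' ∈ Finset.range N, ∫ t : ℝ, ∑ m' ∈ Finset.range M, _)
        = ∑ n' ∈ Finset.range N, ∑ m' ∈ Finset.range M,
            (h i * X n' m' * Complex.exp (2 * Real.pi * Complex.I *
              ((ν i * ((n : ℝ) * T - τ i) +
                (m' : ℝ) * Δf * (((n : ℝ) - (n' : ℝ)) * T - τ i) : ℝ) : ℂ))) *
              (if n' = n ∧ m' = m then 1 else 0) := by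
          refine Finset.sum_congr rfl fun n' hn' => ?_
          rw [integral_finset_sum _ (fun m' _ => (integrable_shift hg hφ _ _ _).const_mul _)]
          exact Finset.sum_congr rfl fun m' hm' => hterm n' hn' m' hm'
      _ = h i * X n m * Complex.exp (2 * Real.pi * Complex.I *
            ((ν i * ((n : ℝ) * T - τ i) +
              (m : ℝ) * Δf * (((n : ℝ) - (n : ℝ)) * T - τ i) : ℝ) : ℂ)) := by
          rw [Finset.sum_eq_single_of_mem n (Finset.mem_range.mpr hn)
            (fun b _ hb => by simp [hb])]
          rw [Finset.sum_eq_single_of_mem m (Finset.mem_range.mpr hm)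
            (fun b _ hb => by simp [hb])]
          simp
  -- assemble
  show (∫ t : ℝ, (starRingEnd ℂ) (g (t - (n : ℝ) * T)) * y t *
      Complex.exp (-(2 * Real.pi * Complex.I) *
        ((((m : ℝ) * Δf : ℝ) : ℂ) * ((t : ℂ) - (((n : ℝ) * T : ℝ) : ℂ))))) = _
  rw [integral_congr_ae (Filter.Eventually.of_forall hpt)]
  rw [integral_finset_sum _ (fun i _ => integrable_finset_sum _
    (fun n' _ => integrable_finset_sum _
      (fun m' _ => (integrable_shift hg hφ _ _ _).const_mul _)))]
  rw [Finset.sum_congr rfl fun i _ => hinner i]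
  rw [Finset.sum_mul]
  refine Finset.sum_congr rfl fun i _ => ?_
  have hE : Complex.exp (2 * Real.pi * Complex.I *
        ((ν i * ((n : ℝ) * T - τ i) +
          (m : ℝ) * Δf * (((n : ℝ) - (n : ℝ)) * T - τ i) : ℝ) : ℂ)) =
      Complex.exp (2 * Real.pi * Complex.I * ((ν i * (n : ℝ) * T : ℝ) : ℂ)) *
        Complex.exp (-(2 * Real.pi * Complex.I) *
          (((ν i + (m : ℝ) * Δf) * τ i : ℝ) : ℂ)) := by
    rw [← Complex.exp_add]
    congr 1
    push_cast
    ring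
  linear_combination (h i * X n m) * hE
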